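/- Let Ψ = (I, ≤) be a finite partially ordered set and let w be the width of the itemset taxonomy I(Ψ) (the antichains of Ψ ordered by ⊑). Then the number of antichains of I(Ψ) (i.e., the cardinality of the solution taxonomy S(Ψ)) is at most (|I| + 2)^w. -/

import Mathlib

open Finset

section Dilworth

variable {β : Type*} [PartialOrder β] [DecidableEq β]

/-- An antichain covered by a family of chains has at most as many elements as chains. -/
lemma antichain_card_le_of_cover {T : Finset β} {𝒟 : Finset (Finset β)}
    (hT : IsAntichain (· ≤ ·) (T : Set β))
    (hchain : ∀ C ∈ 𝒟, IsChain (· ≤ ·) (C : Set β))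
    (hcov : ∀ y ∈ T, ∃ C ∈ 𝒟, y ∈ C) :
    T.card ≤ 𝒟.card := by
  classical
  set g : β → Finset β := fun y => if h : ∃ C ∈ 𝒟, y ∈ C then h.choose else ∅ with hg
  have hgspec : ∀ y ∈ T, g y ∈ 𝒟 ∧ y ∈ g y := by
    intro y hy
    have h : ∃ C ∈ 𝒟, y ∈ C := hcov y hy
    have : g y = h.choose := dif_pos h
    rw [this]
    exact ⟨h.choose_spec.1, h.choose_spec.2⟩
  apply Finset.card_le_card_of_injOn g (fun y hy => (hgspec y hy).1)
  intro y1 h1 y2 h2 heq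
  by_contra hne
  have hy1 : y1 ∈ g y1 := (hgspec y1 h1).2
  have hy2 : y2 ∈ g y1 := heq ▸ (hgspec y2 h2).2
  have hc := hchain _ (hgspec y1 h1).1 hy1 hy2 hne
  rcases hc with h | h
  · exact hT h1 h2 hne h
  · exact hT h2 h1 (Ne.symm hne) h

/-- Dilworth's theorem: a finite set in a poset whose antichains all have at most `w`
elements can be covered by at most `w` pairwise disjoint chains. -/
lemma dilworth :
    ∀ (n : ℕ) (S : Finset β), S.card ≤ n → ∀ (w : ℕ),
    (∀ T ⊆ S, IsAntichain (· ≤ ·) (T : Set β) → T.card ≤ w) →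
    ∃ 𝒞 : Finset (Finset β), 𝒞.card ≤ w ∧
      (∀ C ∈ 𝒞, IsChain (· ≤ ·) (C : Set β) ∧ C ⊆ S) ∧
      (∀ C ∈ 𝒞, ∀ C' ∈ 𝒞, C ≠ C' → Disjoint C C') ∧
      (∀ x ∈ S, ∃ C ∈ 𝒞, x ∈ C) := by
  classical
  intro n
  induction n with
  | zero =>
    intro S hS w _
    have : S = ∅ := Finset.card_eq_zero.1 (Nat.le_zero.1 hS)
    subst this
    exact ⟨∅, by simp, by simp, by simp, by simp⟩
  | succ n ih =>
    intro S hS w hw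
    rcases S.eq_empty_or_nonempty with rfl | hne
    · exact ⟨∅, by simp, by simp, by simp, by simp⟩
    obtain ⟨a, haS, hamax⟩ := S.exists_maximal hne
    set S' := S.erase a with hS'def
    have hS'S : S' ⊆ S := Finset.erase_subset _ _
    have hS'card : S'.card ≤ n := by
      rw [hS'def, Finset.card_erase_of_mem haS]; omega
    set 𝒯 : Finset (Finset β) :=
      S'.powerset.filter (fun T => IsAntichain (· ≤ ·) (T : Set β)) with h𝒯
    have hVT : ∅ ∈ 𝒯 := by
      simp only [h𝒯, Finset.mem_filter, Finset.mem_powerset]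
      exact ⟨Finset.empty_subset _, by simp [IsAntichain]⟩
    have hmem𝒯 : ∀ T, T ∈ 𝒯 ↔ T ⊆ S' ∧ IsAntichain (· ≤ ·) (T : Set β) := by
      intro T; simp [h𝒯, Finset.mem_powerset]
    set d := (𝒯.image Finset.card).max' ⟨0, Finset.mem_image_of_mem _ hVT⟩ with hd
    have hd_ub : ∀ T ⊆ S', IsAntichain (· ≤ ·) (T : Set β) → T.card ≤ d := by
      intro T hT hTa
      exact Finset.le_max' _ _ (Finset.mem_image_of_mem _ ((hmem𝒯 T).2 ⟨hT, hTa⟩))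
    obtain ⟨A', hA'mem, hA'card⟩ : ∃ T ∈ 𝒯, T.card = d := by
      have h := Finset.max'_mem (𝒯.image Finset.card)
        ⟨0, Finset.mem_image_of_mem _ hVT⟩
      rw [Finset.mem_image] at h
      obtain ⟨T, h1, h2⟩ := h
      exact ⟨T, h1, h2⟩
    have hA'sub : A' ⊆ S' := ((hmem𝒯 A').1 hA'mem).1
    have hA'anti : IsAntichain (· ≤ ·) (A' : Set β) := ((hmem𝒯 A').1 hA'mem).2
    have hdw : d ≤ w := hA'card ▸ hw A' (hA'sub.trans hS'S) hA'anti
    by_cases hd0 : d = 0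
    · -- then S' = ∅, S = {a}
      have hS'empty : S' = ∅ := by
        by_contra h
        obtain ⟨x, hx⟩ := Finset.nonempty_iff_ne_empty.2 h
        have h1 := hd_ub {x} (Finset.singleton_subset_iff.2 hx)
          (Set.Subsingleton.isAntichain (by simp) _)
        simp [hd0] at h1
      have hSa : S = {a} := by
        apply Finset.eq_singleton_iff_unique_mem.2
        refine ⟨haS, ?_⟩
        intro x hx
        by_contra hxa
        exact absurd (Finset.mem_erase.2 ⟨hxa, hx⟩) (by rw [← hS'def, hS'empty]; simp)
      have h1w : 1 ≤ w := by
        have := hw {a} (by simp [hSa]) (Set.Subsingleton.isAntichain (by simp) _)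
        simpa using this
      refine ⟨{{a}}, by simpa using h1w, ?_, ?_, ?_⟩
      · intro C hC
        simp only [Finset.mem_singleton] at hC
        subst hC
        exact ⟨Set.Subsingleton.isChain (by simp), by simp [hSa]⟩
      · intro C hC C' hC' hne
        simp only [Finset.mem_singleton] at hC hC'
        exact absurd (hC.trans hC'.symm) hne
      · intro x hx
        rw [hSa, Finset.mem_singleton] at hx
        exact ⟨{a}, by simp [hx]⟩
    -- main case : d ≥ 1
    obtain ⟨𝒞, h𝒞card, h𝒞props, h𝒞disj, h𝒞cov⟩ :=
      ih S' hS'card d (fun T hT hTa => hd_ub T hT hTa)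
    -- every maximum antichain of S' meets every chain
    have hstar : ∀ T ∈ 𝒯, T.card = d → ∀ C ∈ 𝒞, ∃ y ∈ T, y ∈ C := by
      intro T hTmem hTcard C hC
      by_contra hcon
      push_neg at hcon
      have hTsub : T ⊆ S' := ((hmem𝒯 T).1 hTmem).1
      have hTanti : IsAntichain (· ≤ ·) (T : Set β) := ((hmem𝒯 T).1 hTmem).2
      have hle : T.card ≤ (𝒞.erase C).card := by
        apply antichain_card_le_of_cover hTanti
          (fun C' hC' => (h𝒞props C' (Finset.mem_of_mem_erase hC')).1)
        intro y hy
        obtain ⟨C', hC', hyC'⟩ := h𝒞cov y (hTsub hy)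
        refine ⟨C', Finset.mem_erase.2 ⟨?_, hC'⟩, hyC'⟩
        rintro rfl
        exact hcon y hy hyC'
      have herase : (𝒞.erase C).card = 𝒞.card - 1 := Finset.card_erase_of_mem hC
      have hCne : 1 ≤ 𝒞.card := Finset.card_pos.2 ⟨C, hC⟩
      omega
    -- the top element of each chain among max antichain members
    have hM : ∀ C ∈ 𝒞, ∃ m, (m ∈ C ∧ ∃ T ∈ 𝒯, T.card = d ∧ m ∈ T) ∧
        ∀ x ∈ C, (∃ T ∈ 𝒯, T.card = d ∧ x ∈ T) → x ≤ m := by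
      intro C hC
      set M := C.filter (fun x => ∃ T ∈ 𝒯, T.card = d ∧ x ∈ T) with hMdef
      have hMne : M.Nonempty := by
        obtain ⟨y, hyT, hyC⟩ := hstar A' hA'mem hA'card C hC
        exact ⟨y, Finset.mem_filter.2 ⟨hyC, A', hA'mem, hA'card, hyT⟩⟩
      obtain ⟨m, hmM, hmmax⟩ := M.exists_maximal hMne
      have hmC : m ∈ C := (Finset.mem_filter.1 hmM).1
      refine ⟨m, ⟨hmC, (Finset.mem_filter.1 hmM).2⟩, ?_⟩
      intro x hxC hxT
      have hxM : x ∈ M := Finset.mem_filter.2 ⟨hxC, hxT⟩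
      rcases eq_or_ne x m with rfl | hne
      · exact le_rfl
      · rcases (h𝒞props C hC).1 (Finset.mem_coe.2 hxC) (Finset.mem_coe.2 hmC) hne with h | h
        · exact h
        · rcases eq_or_lt_of_le h with h' | h'
          · exact h'.ge
          · exact absurd h' (not_lt_of_ge (hmmax hxM h'.le))
    haveI : Nonempty β := ⟨a⟩
    choose! aC haC using hM
    have haC_mem : ∀ C ∈ 𝒞, aC C ∈ C := fun C hC => (haC C hC).1.1
    have haC_S' : ∀ C ∈ 𝒞, aC C ∈ S' := fun C hC => (h𝒞props C hC).2 (haC_mem C hC)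
    have haC_incomp : ∀ C ∈ 𝒞, ∀ C' ∈ 𝒞, C ≠ C' → ¬ aC C ≤ aC C' := by
      intro C hC C' hC' hne hle
      obtain ⟨T, hT, hTcard, hmemT⟩ := (haC C' hC').1.2
      obtain ⟨y, hyT, hyC⟩ := hstar T hT hTcard C hC
      have hy_le : y ≤ aC C := (haC C hC).2 y hyC ⟨T, hT, hTcard, hyT⟩
      have hyle : y ≤ aC C' := hy_le.trans hle
      have hTanti : IsAntichain (· ≤ ·) (T : Set β) := ((hmem𝒯 T).1 hT).2
      rcases eq_or_ne y (aC C') with heq | hne2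
      · have hmem2 : y ∈ C' := heq ▸ haC_mem C' hC'
        exact (Finset.disjoint_left.1 (h𝒞disj C hC C' hC' hne)) hyC hmem2
      · exact hTanti (Finset.mem_coe.2 hyT) (Finset.mem_coe.2 hmemT) hne2 hyle
    by_cases hcomp : ∃ C ∈ 𝒞, aC C ≤ a
    · -- case (i): extend the chain through aC C₀ by a, and recurse
      obtain ⟨C₀, hC₀, hle₀⟩ := hcomp
      set K := insert a (C₀.filter (· ≤ aC C₀)) with hK
      have haK : a ∈ K := Finset.mem_insert_self _ _
      have hKsub : K ⊆ S := by
        intro x hx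
        rcases Finset.mem_insert.1 hx with rfl | hx'
        · exact haS
        · exact hS'S ((h𝒞props C₀ hC₀).2 (Finset.mem_of_mem_filter _ hx'))
      have hSK_card : (S \ K).card ≤ n := by
        have hss : S \ K ⊂ S := by
          apply Finset.ssubset_iff_of_subset (Finset.sdiff_subset) |>.2
          exact ⟨a, haS, by simp [haK]⟩
        have := Finset.card_lt_card hss
        omega
      have hwidthK : ∀ T ⊆ S \ K, IsAntichain (· ≤ ·) (T : Set β) → T.card ≤ d - 1 := by
        intro T hT hTa
        have hTS' : T ⊆ S' := by
          intro x hx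
          have hx' := hT hx
          rw [Finset.mem_sdiff] at hx'
          refine Finset.mem_erase.2 ⟨?_, hx'.1⟩
          rintro rfl
          exact hx'.2 haK
        have hTd : T.card ≤ d := hd_ub T hTS' hTa
        rcases eq_or_lt_of_le hTd with heq | hlt
        · exfalso
          obtain ⟨y, hyT, hyC⟩ := hstar T ((hmem𝒯 T).2 ⟨hTS', hTa⟩) heq C₀ hC₀
          have hy_le : y ≤ aC C₀ :=
            (haC C₀ hC₀).2 y hyC ⟨T, (hmem𝒯 T).2 ⟨hTS', hTa⟩, heq, hyT⟩
          have hyK : y ∈ K := Finset.mem_insert.2 (Or.inr (Finset.mem_filter.2 ⟨hyC, hy_le⟩))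
          have := hT hyT
          rw [Finset.mem_sdiff] at this
          exact this.2 hyK
        · omega
      obtain ⟨𝒞'', h1, h2, h3, h4⟩ := ih (S \ K) hSK_card (d - 1) hwidthK
      have hKdisj : ∀ C ∈ 𝒞'', Disjoint K C := by
        intro C hC
        rw [Finset.disjoint_right]
        intro x hxC hxK
        have := (h2 C hC).2 hxC
        rw [Finset.mem_sdiff] at this
        exact this.2 hxK
      have hKchain : IsChain (· ≤ ·) (K : Set β) := by
        intro x hx y hy hne
        simp only [hK, Finset.coe_insert, Set.mem_insert_iff, Finset.mem_coe,
          Finset.mem_filter] at hx hy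
        rcases hx with rfl | ⟨hxC, hxle⟩
        · rcases hy with rfl | ⟨hyC, hyle⟩
          · exact absurd rfl hne
          · exact Or.inr (hyle.trans hle₀)
        · rcases hy with rfl | ⟨hyC, hyle⟩
          · exact Or.inl (hxle.trans hle₀)
          · exact (h𝒞props C₀ hC₀).1 (Finset.mem_coe.2 hxC) (Finset.mem_coe.2 hyC) hne
      have hKnot : K ∉ 𝒞'' := by
        intro hKmem
        have := hKdisj K hKmem
        rw [Finset.disjoint_self_iff_empty] at this
        exact absurd (this ▸ haK) (by simp)
      refine ⟨insert K 𝒞'', ?_, ?_, ?_, ?_⟩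
      · rw [Finset.card_insert_of_notMem hKnot]
        omega
      · intro C hC
        rcases Finset.mem_insert.1 hC with rfl | hC'
        · exact ⟨hKchain, hKsub⟩
        · exact ⟨(h2 C hC').1, (h2 C hC').2.trans (Finset.sdiff_subset)⟩
      · intro C hC C' hC' hne
        rcases Finset.mem_insert.1 hC with rfl | hCm <;>
          rcases Finset.mem_insert.1 hC' with rfl | hC'm
        · exact absurd rfl hne
        · exact hKdisj C' hC'm
        · exact (hKdisj C hCm).symm
        · exact h3 C hCm C' hC'm hne
      · intro x hx
        by_cases hxK : x ∈ K
        · exact ⟨K, Finset.mem_insert_self _ _, hxK⟩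
        · obtain ⟨C, hC, hxC⟩ := h4 x (Finset.mem_sdiff.2 ⟨hx, hxK⟩)
          exact ⟨C, Finset.mem_insert.2 (Or.inr hC), hxC⟩
    · -- case (ii): a together with the aC's forms a bigger antichain
      push_neg at hcomp
      set AA := insert a (𝒞.image aC) with hAA
      have haimg : a ∉ 𝒞.image aC := by
        rw [Finset.mem_image]
        rintro ⟨C, hC, hCa⟩
        have : a ∈ S' := hCa ▸ haC_S' C hC
        exact absurd rfl (Finset.mem_erase.1 this).1
      have hinj : Set.InjOn aC ↑𝒞 := by
        intro C hC C' hC' heq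
        by_contra hne
        have hdisj := h𝒞disj C hC C' hC' hne
        exact (Finset.disjoint_left.1 hdisj) (haC_mem C hC) (heq ▸ haC_mem C' hC')
      have hcard : AA.card = 𝒞.card + 1 := by
        rw [hAA, Finset.card_insert_of_notMem haimg, Finset.card_image_of_injOn hinj]
      have hAAsub : AA ⊆ S := by
        intro x hx
        rcases Finset.mem_insert.1 hx with rfl | hx'
        · exact haS
        · obtain ⟨C, hC, rfl⟩ := Finset.mem_image.1 hx'
          exact hS'S (haC_S' C hC)
      have hAAanti : IsAntichain (· ≤ ·) (AA : Set β) := by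
        intro x hx y hy hne hle
        simp only [hAA, Finset.coe_insert, Set.mem_insert_iff, Finset.mem_coe,
          Finset.mem_image] at hx hy
        rcases hx with rfl | ⟨C, hC, rfl⟩
        · rcases hy with rfl | ⟨C', hC', rfl⟩
          · exact hne rfl
          · exact not_lt_of_ge (hamax (hS'S (haC_S' C' hC')) (lt_of_le_of_ne hle hne).le) (lt_of_le_of_ne hle hne)
        · rcases hy with rfl | ⟨C', hC', rfl⟩
          · exact hcomp C hC hle
          · have hCC' : C ≠ C' := by rintro rfl; exact hne rfl
            exact haC_incomp C hC C' hC' hCC' hle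
      have hwAA : 𝒞.card + 1 ≤ w := hcard ▸ hw AA hAAsub hAAanti
      have hanot : {a} ∉ 𝒞 := by
        intro h
        have := haC_S' {a} h
        have ha' : aC {a} = a := by
          have := haC_mem {a} h
          simpa using this
        rw [ha'] at this
        exact absurd rfl (Finset.mem_erase.1 this).1
      refine ⟨insert {a} 𝒞, ?_, ?_, ?_, ?_⟩
      · rw [Finset.card_insert_of_notMem hanot]; omega
      · intro C hC
        rcases Finset.mem_insert.1 hC with rfl | hC'
        · exact ⟨Set.Subsingleton.isChain (by simp), by simpa using haS⟩
        · exact ⟨(h𝒞props C hC').1, (h𝒞props C hC').2.trans hS'S⟩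
      · intro C hC C' hC' hne
        have hdisjb : ∀ C'' ∈ 𝒞, Disjoint {a} C'' := by
          intro C'' hC''
          rw [Finset.disjoint_left]
          rintro x hx hx'
          rw [Finset.mem_singleton] at hx
          subst hx
          have := (h𝒞props C'' hC'').2 hx'
          exact absurd rfl (Finset.mem_erase.1 this).1
        rcases Finset.mem_insert.1 hC with rfl | hCm <;>
          rcases Finset.mem_insert.1 hC' with rfl | hC'm
        · exact absurd rfl hne
        · exact hdisjb C' hC'm
        · exact (hdisjb C hCm).symm
        · exact h𝒞disj C hCm C' hC'm hne
      · intro x hx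
        rcases eq_or_ne x a with heq | hxa
        · exact ⟨singleton a, Finset.mem_insert_self _ _,
            by rw [heq]; exact Finset.mem_singleton_self a⟩
        · obtain ⟨C, hC, hxC⟩ := h𝒞cov x (Finset.mem_erase.2 ⟨hxa, hx⟩)
          exact ⟨C, Finset.mem_insert.2 (Or.inr hC), hxC⟩

/-- Counting antichains in a union of chains. -/
lemma card_antichains_le :
    ∀ 𝒞 : Finset (Finset β), (∀ C ∈ 𝒞, IsChain (· ≤ ·) (C : Set β)) →
    ∀ F : Finset (Finset β),
      (∀ T ∈ F, T ⊆ 𝒞.biUnion id ∧ IsAntichain (· ≤ ·) (T : Set β)) →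
      F.card ≤ ∏ C ∈ 𝒞, (C.card + 1) := by
  classical
  intro 𝒞
  induction 𝒞 using Finset.induction_on with
  | empty =>
    intro _ F hF
    simp only [Finset.prod_empty]
    have hsub : F ⊆ {∅} := by
      intro T hT
      rw [Finset.mem_singleton]
      have := (hF T hT).1
      rw [Finset.biUnion_empty] at this
      exact Finset.subset_empty.1 this
    exact (Finset.card_le_card hsub).trans (by simp)
  | @insert C 𝒞 hC ihc =>
    intro hchain F hF
    have hchain' : ∀ C' ∈ 𝒞, IsChain (· ≤ ·) (C' : Set β) :=
      fun C' hC' => hchain C' (Finset.mem_insert.2 (Or.inr hC'))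
    have hCchain : IsChain (· ≤ ·) (C : Set β) := hchain C (Finset.mem_insert_self _ _)
    set F' := F.image (fun T => T \ C) with hF'
    have hF'cond : ∀ T ∈ F', T ⊆ 𝒞.biUnion id ∧ IsAntichain (· ≤ ·) (T : Set β) := by
      intro T hT
      obtain ⟨T₀, hT₀, rfl⟩ := Finset.mem_image.1 hT
      obtain ⟨hsub, hanti⟩ := hF T₀ hT₀
      constructor
      · intro x hx
        rw [Finset.mem_sdiff] at hx
        have := hsub hx.1
        rw [Finset.mem_biUnion] at this ⊢
        obtain ⟨C', hC', hxC'⟩ := this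
        rcases Finset.mem_insert.1 hC' with rfl | hC'm
        · exact absurd (by simpa using hxC') hx.2
        · exact ⟨C', hC'm, by simpa using hxC'⟩
      · exact hanti.subset (by rw [Finset.coe_sdiff]; exact Set.diff_subset)
    set t := (insert (∅ : Finset β) (C.image (fun x => ({x} : Finset β)))) ×ˢ F' with ht
    have hmaps : ∀ T ∈ F, (T ∩ C, T \ C) ∈ t := by
      intro T hT
      obtain ⟨hTsub, hTanti⟩ := hF T hT
      rw [ht, Finset.mem_product]
      refine ⟨?_, Finset.mem_image_of_mem _ hT⟩
      rcases (T ∩ C).eq_empty_or_nonempty with h | ⟨x, hx⟩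
      · rw [h]; exact Finset.mem_insert_self _ _
      · have hxT : x ∈ T := (Finset.mem_inter.1 hx).1
        have hxC : x ∈ C := (Finset.mem_inter.1 hx).2
        have hsing : T ∩ C = {x} := by
          apply Finset.eq_singleton_iff_unique_mem.2
          refine ⟨hx, ?_⟩
          intro y hy
          by_contra hne
          have hyT : y ∈ T := (Finset.mem_inter.1 hy).1
          have hyC : y ∈ C := (Finset.mem_inter.1 hy).2
          rcases hCchain (Finset.mem_coe.2 hyC) (Finset.mem_coe.2 hxC) hne with h | h
          · exact hTanti (Finset.mem_coe.2 hyT) (Finset.mem_coe.2 hxT) hne h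
          · exact hTanti (Finset.mem_coe.2 hxT) (Finset.mem_coe.2 hyT) (Ne.symm hne) h
        rw [hsing]
        exact Finset.mem_insert.2 (Or.inr (Finset.mem_image_of_mem _ hxC))
    have hinj : Set.InjOn (fun T : Finset β => (T ∩ C, T \ C)) ↑F := by
      intro T1 _ T2 _ heq
      simp only [Prod.mk.injEq] at heq
      apply Finset.ext
      intro x
      by_cases hxC : x ∈ C
      · constructor <;> intro hx
        · have h2 : x ∈ T2 ∩ C := heq.1 ▸ Finset.mem_inter.2 ⟨hx, hxC⟩
          exact (Finset.mem_inter.1 h2).1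
        · have h2 : x ∈ T1 ∩ C := heq.1.symm ▸ Finset.mem_inter.2 ⟨hx, hxC⟩
          exact (Finset.mem_inter.1 h2).1
      · constructor <;> intro hx
        · have h2 : x ∈ T2 \ C := heq.2 ▸ Finset.mem_sdiff.2 ⟨hx, hxC⟩
          exact (Finset.mem_sdiff.1 h2).1
        · have h2 : x ∈ T1 \ C := heq.2.symm ▸ Finset.mem_sdiff.2 ⟨hx, hxC⟩
          exact (Finset.mem_sdiff.1 h2).1
    calc F.card ≤ t.card := Finset.card_le_card_of_injOn _ hmaps hinj
      _ = (insert (∅ : Finset β) (C.image (fun x => ({x} : Finset β)))).card * F'.card := by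
          rw [ht, Finset.card_product]
      _ ≤ (C.card + 1) * ∏ C' ∈ 𝒞, (C'.card + 1) := by
          apply Nat.mul_le_mul
          · calc (insert (∅ : Finset β) (C.image (fun x => ({x} : Finset β)))).card
                ≤ (C.image ({·})).card + 1 := Finset.card_insert_le _ _
              _ ≤ C.card + 1 :=
                  Nat.add_le_add_right (Finset.card_image_le (s := C) (f := fun x => ({x} : Finset β))) 1
          · exact ihc hchain' F' hF'cond
      _ = ∏ C' ∈ insert C 𝒞, (C'.card + 1) := (Finset.prod_insert (f := fun C => C.card + 1) hC).symm

end Dilworth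

section Downsets

variable {α : Type*} [PartialOrder α] [DecidableEq α]

open Classical in
/-- The set of maximal elements of a finite set. -/
noncomputable def maxElems (D : Finset α) : Finset α :=
  D.filter (fun x => ∀ y ∈ D, ¬ x < y)

open Classical in
/-- The down-closure of a finite set in a finite poset. -/
noncomputable def downCl [Fintype α] (A : Finset α) : Finset α :=
  Finset.univ.filter (fun x => ∃ a ∈ A, x ≤ a)

lemma mem_maxElems {D : Finset α} {x : α} :
    x ∈ maxElems D ↔ x ∈ D ∧ ∀ y ∈ D, ¬ x < y := by
  classical
  simp [maxElems]

lemma mem_downCl [Fintype α] {A : Finset α} {x : α} :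
    x ∈ downCl A ↔ ∃ a ∈ A, x ≤ a := by
  classical
  simp [downCl]

lemma maxElems_antichain (D : Finset α) :
    IsAntichain (· ≤ ·) ((maxElems D : Finset α) : Set α) := by
  intro x hx y hy hne hle
  rw [Finset.mem_coe, mem_maxElems] at hx hy
  exact hx.2 y hy.1 (lt_of_le_of_ne hle hne)

/-- Every element of a finite set lies below a maximal element. -/
lemma exists_le_maxElems {D : Finset α} {x : α} (hx : x ∈ D) :
    ∃ a ∈ maxElems D, x ≤ a := by
  classical
  set F := D.filter (x ≤ ·) with hF
  have hFne : F.Nonempty := ⟨x, Finset.mem_filter.2 ⟨hx, le_rfl⟩⟩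
  obtain ⟨m, hmF, hmmax⟩ := F.exists_maximal hFne
  have hmD : m ∈ D := (Finset.mem_filter.1 hmF).1
  have hxm : x ≤ m := (Finset.mem_filter.1 hmF).2
  refine ⟨m, mem_maxElems.2 ⟨hmD, ?_⟩, hxm⟩
  intro y hy hlt
  exact not_lt_of_ge (hmmax (Finset.mem_filter.2 ⟨hy, hxm.trans hlt.le⟩) hlt.le) hlt

lemma mem_downset_iff [Fintype α] {D : Finset α}
    (hD : ∀ x ∈ D, ∀ y, y ≤ x → y ∈ D) {x : α} :
    x ∈ D ↔ ∃ a ∈ maxElems D, x ≤ a := by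
  constructor
  · exact exists_le_maxElems
  · rintro ⟨a, ha, hxa⟩
    exact hD a (mem_maxElems.1 ha).1 x hxa

lemma downCl_maxElems [Fintype α] {D : Finset α}
    (hD : ∀ x ∈ D, ∀ y, y ≤ x → y ∈ D) :
    downCl (maxElems D) = D := by
  ext x
  rw [mem_downCl, ← mem_downset_iff hD]

lemma maxElems_downCl [Fintype α] {A : Finset α}
    (hA : IsAntichain (· ≤ ·) (A : Set α)) :
    maxElems (downCl A) = A := by
  ext x
  rw [mem_maxElems]
  constructor
  · rintro ⟨hx, hmax⟩
    obtain ⟨a, ha, hxa⟩ := mem_downCl.1 hx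
    have haD : a ∈ downCl A := mem_downCl.2 ⟨a, ha, le_rfl⟩
    rcases eq_or_ne x a with rfl | hne
    · exact ha
    · exact absurd (lt_of_le_of_ne hxa hne) (hmax a haD)
  · intro hx
    refine ⟨mem_downCl.2 ⟨x, hx, le_rfl⟩, ?_⟩
    intro y hy hlt
    obtain ⟨b, hb, hyb⟩ := mem_downCl.1 hy
    have hxb : x < b := lt_of_lt_of_le hlt hyb
    exact hA (Finset.mem_coe.2 hx) (Finset.mem_coe.2 hb) (ne_of_lt hxb) hxb.le

lemma downCl_isDownset [Fintype α] (A : Finset α) :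
    ∀ x ∈ downCl A, ∀ y, y ≤ x → y ∈ downCl A := by
  intro x hx y hyx
  obtain ⟨a, ha, hxa⟩ := mem_downCl.1 hx
  exact mem_downCl.2 ⟨a, ha, hyx.trans hxa⟩

end Downsets

/-- Let `Ψ = (I, ≤)` be a finite poset and let `w` be the width of the itemset taxonomy
`I(Ψ)` (the antichains of `Ψ` ordered by `⊑`, where `A ⊑ B` iff every `a ∈ A` satisfies
`a ≤ b` for some `b ∈ B`); that is, there is a family of `w` antichains of `Ψ` pairwise
incomparable under `⊑`, and every such family has at most `w` members. Then the number
of antichains of `I(Ψ)` (the cardinality of the solution taxonomy `S(Ψ)`) is at most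
`(|I| + 2) ^ w`. -/
theorem card_solution_taxonomy_le
    {α : Type*} [Fintype α] [PartialOrder α] [DecidableEq α]
    (w : ℕ)
    (hex : ∃ 𝒜 : Finset (Finset α),
      (∀ A ∈ 𝒜, IsAntichain (· ≤ ·) (A : Set α)) ∧
      (∀ A ∈ 𝒜, ∀ B ∈ 𝒜, A ≠ B → ¬ (∀ a ∈ A, ∃ b ∈ B, a ≤ b)) ∧
      𝒜.card = w)
    (hwidth : ∀ 𝒜 : Finset (Finset α),
      (∀ A ∈ 𝒜, IsAntichain (· ≤ ·) (A : Set α)) →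
      (∀ A ∈ 𝒜, ∀ B ∈ 𝒜, A ≠ B → ¬ (∀ a ∈ A, ∃ b ∈ B, a ≤ b)) →
      𝒜.card ≤ w) :
    Set.ncard {𝒜 : Finset (Finset α) |
      (∀ A ∈ 𝒜, IsAntichain (· ≤ ·) (A : Set α)) ∧
      ∀ A ∈ 𝒜, ∀ B ∈ 𝒜, A ≠ B → ¬ (∀ a ∈ A, ∃ b ∈ B, a ≤ b)}
      ≤ (Fintype.card α + 2) ^ w := by
  classical
  set n := Fintype.card α with hn
  -- the finset of downsets
  set S : Finset (Finset α) :=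
    Finset.univ.filter (fun D => ∀ x ∈ D, ∀ y, y ≤ x → y ∈ D) with hS
  have hmemS : ∀ D, D ∈ S ↔ ∀ x ∈ D, ∀ y, y ≤ x → y ∈ D := by
    intro D; simp [hS]
  -- width of S under ⊆ is at most w
  have hwS : ∀ T : Finset (Finset α), T ⊆ S → IsAntichain (· ≤ ·) (T : Set (Finset α)) → T.card ≤ w := by
    intro T hTS hTanti
    have hinj : Set.InjOn maxElems ((↑T : Set (Finset α))) := by
      intro D hD E hE heq
      have hD' := (hmemS D).1 (hTS hD)
      have hE' := (hmemS E).1 (hTS hE)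
      rw [← downCl_maxElems hD', ← downCl_maxElems hE', heq]
    set 𝒜 := T.image maxElems with h𝒜
    have h1 : ∀ A ∈ 𝒜, IsAntichain (· ≤ ·) (A : Set α) := by
      intro A hA
      obtain ⟨D, _, rfl⟩ := Finset.mem_image.1 hA
      exact maxElems_antichain D
    have h2 : ∀ A ∈ 𝒜, ∀ B ∈ 𝒜, A ≠ B → ¬ (∀ a ∈ A, ∃ b ∈ B, a ≤ b) := by
      intro A hA B hB hne hcomp
      obtain ⟨D, hD, rfl⟩ := Finset.mem_image.1 hA
      obtain ⟨E, hE, rfl⟩ := Finset.mem_image.1 hB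
      have hDE : D ≠ E := by rintro rfl; exact hne rfl
      have hE' := (hmemS E).1 (hTS hE)
      have hD' := (hmemS D).1 (hTS hD)
      have hsub : D ⊆ E := by
        intro x hx
        obtain ⟨a, ha, hxa⟩ := (mem_downset_iff hD').1 hx
        obtain ⟨b, hb, hab⟩ := hcomp a ha
        exact hE' b (mem_maxElems.1 hb).1 x (hxa.trans hab)
      exact hTanti (Finset.mem_coe.2 hD) (Finset.mem_coe.2 hE) hDE
        (Finset.le_iff_subset.2 hsub)
    have := hwidth 𝒜 h1 h2
    rwa [h𝒜, Finset.card_image_of_injOn hinj] at this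
  -- Dilworth: cover S by at most w chains
  obtain ⟨𝒞, h𝒞card, h𝒞props, _, h𝒞cov⟩ := dilworth S.card S le_rfl w hwS
  -- the finset of antichains of downsets
  set FF := ((𝒞.biUnion id).powerset.filter
    (fun T : Finset (Finset α) => IsAntichain (· ≤ ·) (T : Set (Finset α)))) with hFF
  have hFFcard : FF.card ≤ (n + 2) ^ w := by
    have h1 : FF.card ≤ ∏ C ∈ 𝒞, (C.card + 1) := by
      apply card_antichains_le 𝒞 (fun C hC => (h𝒞props C hC).1) FF
      intro T hT
      rw [hFF, Finset.mem_filter, Finset.mem_powerset] at hT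
      exact hT
    have h2 : ∏ C ∈ 𝒞, (C.card + 1) ≤ (n + 2) ^ 𝒞.card := by
      apply Finset.prod_le_pow_card
      intro C hC
      -- C is a chain of finsets of α, so |C| ≤ n + 1
      have hCcard : C.card ≤ n + 1 := by
        have hinj : Set.InjOn Finset.card ((↑C : Set (Finset α))) := by
          intro D hD E hE heq
          rcases eq_or_ne D E with h | h
          · exact h
          · rcases (h𝒞props C hC).1 hD hE h with hle | hle
            · exact Finset.eq_of_subset_of_card_le (Finset.le_iff_subset.1 hle) heq.ge
            · exact (Finset.eq_of_subset_of_card_le (Finset.le_iff_subset.1 hle) heq.le).symm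
        have hmaps : ∀ D ∈ C, D.card ∈ Finset.range (n + 1) := by
          intro D _
          rw [Finset.mem_range, hn]
          exact Nat.lt_succ_of_le (Finset.card_le_univ D)
        have := Finset.card_le_card_of_injOn Finset.card hmaps hinj
        simpa using this
      omega
    have h3 : (n + 2) ^ 𝒞.card ≤ (n + 2) ^ w :=
      Nat.pow_le_pow_right (by omega) h𝒞card
    omega
  -- inject the solution taxonomy into FF
  have hmain : Set.ncard {𝒜 : Finset (Finset α) |
      (∀ A ∈ 𝒜, IsAntichain (· ≤ ·) (A : Set α)) ∧
      ∀ A ∈ 𝒜, ∀ B ∈ 𝒜, A ≠ B → ¬ (∀ a ∈ A, ∃ b ∈ B, a ≤ b)} ≤ FF.card := by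
    rw [← Set.ncard_coe_finset FF]
    apply Set.ncard_le_ncard_of_injOn (fun 𝒜 => 𝒜.image downCl)
    · rintro 𝒜 ⟨ha1, ha2⟩
      rw [Finset.mem_coe, hFF, Finset.mem_filter, Finset.mem_powerset]
      constructor
      · intro D hD
        obtain ⟨A, hA, rfl⟩ := Finset.mem_image.1 hD
        have hDS : downCl A ∈ S := (hmemS _).2 (downCl_isDownset A)
        obtain ⟨C, hC, hmem⟩ := h𝒞cov _ hDS
        exact Finset.mem_biUnion.2 ⟨C, hC, hmem⟩
      · intro D hD E hE hne hle
        rw [Finset.mem_coe] at hD hE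
        obtain ⟨A, hA, rfl⟩ := Finset.mem_image.1 hD
        obtain ⟨B, hB, rfl⟩ := Finset.mem_image.1 hE
        have hAB : A ≠ B := by rintro rfl; exact hne rfl
        apply ha2 A hA B hB hAB
        intro a ha
        have : a ∈ downCl B := Finset.le_iff_subset.1 hle (mem_downCl.2 ⟨a, ha, le_rfl⟩)
        exact mem_downCl.1 this
    · rintro 𝒜 ⟨ha1, _⟩ ℬ ⟨hb1, _⟩ heq
      have h𝒜 : (𝒜.image downCl).image maxElems = 𝒜 := by
        rw [Finset.image_image]
        rw [show 𝒜 = 𝒜.image id from (Finset.image_id).symm]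
        nth_rewrite 1 [Finset.image_id]
        apply Finset.image_congr
        intro A hA
        exact maxElems_downCl (ha1 A hA)
      have hℬ : (ℬ.image downCl).image maxElems = ℬ := by
        rw [Finset.image_image]
        rw [show ℬ = ℬ.image id from (Finset.image_id).symm]
        nth_rewrite 1 [Finset.image_id]
        apply Finset.image_congr
        intro B hB
        exact maxElems_downCl (hb1 B hB)
      have heq' : 𝒜.image downCl = ℬ.image downCl := heq
      rw [← h𝒜, ← hℬ, heq']
  omega
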